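/- (Christoffel–Darboux formula, Toeplitz case.) If G is block Toeplitz, then for all λ, ω ∈ ℂ: (1 − λ\bar{ω})·F(λ)ΓF(ω)* = F(λ)Γe₀(e₀*Γe₀)^{-1}e₀*ΓF(ω)* − λ\bar{ω}·F(λ)Γe_n(e_n*Γe_n)^{-1}e_n*ΓF(ω)*. -/

import Mathlib

open Matrix Complex
open scoped ComplexConjugate ComplexOrder

noncomputable section

/-- Index type for `ℂ^m` with `m = (n+1)p`, viewed as `n+1` blocks of size `p`. -/
abbrev Idx (n p : ℕ) : Type := Fin (n + 1) × Fin p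

/-- The `p × m` matrix polynomial `F(λ) = [I_p, λI_p, …, λ^n I_p]`. -/
def Fm (n p : ℕ) (lam : ℂ) : Matrix (Fin p) (Idx n p) ℂ :=
  Matrix.of fun i jk => lam ^ (jk.1 : ℕ) * (if jk.2 = i then 1 else 0)

/-- The `m × p` matrix `e_k` whose `k`-th block is `I_p` and other blocks are `0`. -/
def Ek (n p : ℕ) (k : Fin (n + 1)) : Matrix (Idx n p) (Fin p) ℂ :=
  Matrix.of fun jl i => if jl.1 = k ∧ jl.2 = i then 1 else 0

/-- The nilpotent block shift matrix `A` with blocks `A_{ij} = I_p` iff `j = i+1`. -/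
def Am (n p : ℕ) : Matrix (Idx n p) (Idx n p) ℂ :=
  Matrix.of fun ia jb => if (jb.1 : ℕ) = (ia.1 : ℕ) + 1 ∧ ia.2 = jb.2 then 1 else 0

/-- `G` is block Toeplitz: `g_{i+1,j+1} = g_{ij}` for `0 ≤ i,j ≤ n−1`. -/
def BlockToeplitz (n p : ℕ) (G : Matrix (Idx n p) (Idx n p) ℂ) : Prop :=
  ∀ (i j : Fin n) (a b : Fin p),
    G (i.succ, a) (j.succ, b) = G (i.castSucc, a) (j.castSucc, b)

/-! ### Auxiliary definitions and lemmas -/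

/-- The inclusion of blocks `1,…,n` (shifted down by one). -/
def J0 (n p : ℕ) : Matrix (Idx n p) (Fin n × Fin p) ℂ :=
  Matrix.of fun jb ia => if jb.1 = ia.1.succ ∧ jb.2 = ia.2 then 1 else 0

/-- The inclusion of blocks `0,…,n-1`. -/
def Jnn (n p : ℕ) : Matrix (Idx n p) (Fin n × Fin p) ℂ :=
  Matrix.of fun jb ia => if jb.1 = ia.1.castSucc ∧ jb.2 = ia.2 then 1 else 0

section Struct

variable {n p : ℕ}

lemma hEkEk (k : Fin (n+1)) : (Ek n p k)ᴴ * Ek n p k = 1 := by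
  ext a b
  simp [Ek, Matrix.mul_apply, Fintype.sum_prod_type, conjTranspose_apply,
    one_apply, apply_ite, ite_and, Finset.sum_ite_eq, Finset.sum_ite_eq', eq_comm]

lemma hJ0J0 : (J0 n p)ᴴ * J0 n p = 1 := by
  ext ⟨i,a⟩ ⟨j,b⟩
  simp [J0, Matrix.mul_apply, Fintype.sum_prod_type, conjTranspose_apply,
    one_apply, apply_ite, ite_and, Finset.sum_ite_eq, Finset.sum_ite_eq',
    Fin.succ_inj, Prod.ext_iff, eq_comm]
  split <;> simp_all

lemma hJnJn : (Jnn n p)ᴴ * Jnn n p = 1 := by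
  ext ⟨i,a⟩ ⟨j,b⟩
  simp [Jnn, Matrix.mul_apply, Fintype.sum_prod_type, conjTranspose_apply,
    one_apply, apply_ite, ite_and, Finset.sum_ite_eq, Finset.sum_ite_eq',
    Fin.castSucc_inj, Prod.ext_iff, eq_comm]
  split <;> simp_all

lemma hE0J0 : (Ek n p 0)ᴴ * J0 n p = 0 := by
  ext a ⟨i,b⟩
  simp [Ek, J0, Matrix.mul_apply, Fintype.sum_prod_type, conjTranspose_apply,
    apply_ite, ite_and, Finset.sum_ite_eq, Finset.sum_ite_eq',
    Fin.succ_ne_zero i]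

lemma hLJn : (Ek n p (Fin.last n))ᴴ * Jnn n p = 0 := by
  ext a ⟨i,b⟩
  simp [Ek, Jnn, Matrix.mul_apply, Fintype.sum_prod_type, conjTranspose_apply,
    apply_ite, ite_and, Finset.sum_ite_eq, Finset.sum_ite_eq',
    (Fin.castSucc_lt_last i).ne]

lemma hres0 : Ek n p 0 * (Ek n p 0)ᴴ + J0 n p * (J0 n p)ᴴ = 1 := by
  ext ⟨j,b⟩ ⟨j',b'⟩
  simp only [Matrix.add_apply, Matrix.mul_apply, Fintype.sum_prod_type, Ek, J0,
    conjTranspose_apply, Matrix.of_apply, one_apply]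
  induction j using Fin.cases <;> induction j' using Fin.cases <;>
    simp [apply_ite, ite_and, Finset.sum_ite_eq, Finset.sum_ite_eq', eq_comm,
      Fin.succ_ne_zero, Fin.succ_inj, Prod.ext_iff] <;>
    split <;> simp_all

lemma hresn : Ek n p (Fin.last n) * (Ek n p (Fin.last n))ᴴ + Jnn n p * (Jnn n p)ᴴ = 1 := by
  ext ⟨j,b⟩ ⟨j',b'⟩
  simp only [Matrix.add_apply, Matrix.mul_apply, Fintype.sum_prod_type, Ek, Jnn,
    conjTranspose_apply, Matrix.of_apply, one_apply]
  induction j using Fin.lastCases <;> induction j' using Fin.lastCases <;>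
    simp [apply_ite, ite_and, Finset.sum_ite_eq, Finset.sum_ite_eq', eq_comm,
      (Fin.castSucc_lt_last _).ne, (Fin.castSucc_lt_last _).ne', Fin.castSucc_inj,
      Prod.ext_iff] <;>
    split <;> simp_all

lemma hToe (G : Matrix (Idx n p) (Idx n p) ℂ) (hT : BlockToeplitz n p G) :
    (J0 n p)ᴴ * (G * J0 n p) = (Jnn n p)ᴴ * (G * Jnn n p) := by
  ext ⟨i,a⟩ ⟨j,b⟩
  simp only [Matrix.mul_apply, Fintype.sum_prod_type, J0, Jnn, conjTranspose_apply,
    Matrix.of_apply]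
  simp [apply_ite, ite_and, Finset.sum_ite_eq, Finset.sum_ite_eq', mul_ite, ite_mul,
    Finset.mul_sum, Finset.sum_ite_irrel]
  exact hT i j a b

lemma hshift (lam : ℂ) :
    Fm n p lam * (J0 n p * (Jnn n p)ᴴ) =
      lam • Fm n p lam - (lam^(n+1)) • (Ek n p (Fin.last n))ᴴ := by
  ext a ⟨j,b⟩
  rw [← Matrix.mul_assoc]
  simp only [Matrix.mul_apply, Fintype.sum_prod_type, Fm, J0, Jnn, Ek,
    conjTranspose_apply, Matrix.of_apply, Matrix.sub_apply, Matrix.smul_apply,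
    smul_eq_mul]
  induction j using Fin.lastCases with
  | last =>
    have h1 : ∀ x : Fin n, (Fin.last n = x.castSucc) = False := fun x => by
      simp [(Fin.castSucc_lt_last x).ne']
    simp only [h1, false_and, if_false, star_zero, mul_zero, Finset.sum_const_zero,
      Fin.val_last, true_and, apply_ite, star_one]
    by_cases hba : b = a <;> simp [hba, pow_succ] <;> ring
  | cast i =>
    simp [apply_ite, ite_and, (Fin.castSucc_lt_last i).ne, Fin.castSucc_inj,
      Finset.sum_ite_eq, Finset.sum_ite_eq', eq_comm, Fin.coe_castSucc, pow_succ,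
      mul_comm]
    split <;> simp_all

end Struct

lemma mul_mul_zero {α β γ δ : Type*} [Fintype β] [Fintype γ]
    {M : Matrix α β ℂ} {N : Matrix β γ ℂ} (h : M * N = 0) (Z : Matrix γ δ ℂ) :
    M * (N * Z) = 0 := by
  rw [← Matrix.mul_assoc, h, Matrix.zero_mul]

lemma mul_mul_cancel {α β γ : Type*} [Fintype α] [Fintype γ] [DecidableEq γ]
    {M : Matrix γ α ℂ} {N : Matrix α γ ℂ} (h : M * N = 1) (Z : Matrix γ β ℂ) :
    M * (N * Z) = Z := by
  rw [← Matrix.mul_assoc, h, Matrix.one_mul]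

lemma posdef_comp {m r : Type*} [Fintype m] [Fintype r] [DecidableEq m] [DecidableEq r]
    {M : Matrix m m ℂ} (hM : M.PosDef) (B : Matrix m r ℂ) (hB : Bᴴ * B = 1) :
    (Bᴴ * (M * B)).PosDef := by
  rw [← Matrix.mul_assoc]
  refine Matrix.PosDef.of_dotProduct_mulVec_pos (Matrix.isHermitian_conjTranspose_mul_mul B hM.1) fun x hx => ?_
  have hx' : B *ᵥ x ≠ 0 := by
    intro h
    apply hx
    have h2 : Bᴴ *ᵥ (B *ᵥ x) = 0 := by rw [h, Matrix.mulVec_zero]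
    rwa [Matrix.mulVec_mulVec, hB, Matrix.one_mulVec] at h2
  simpa only [star_mulVec, dotProduct_mulVec, vecMul_vecMul] using hM.dotProduct_mulVec_pos hx'

lemma keyL {m q r : Type*} [Fintype m] [Fintype q] [Fintype r]
    [DecidableEq m] [DecidableEq q] [DecidableEq r]
    (G : Matrix m m ℂ) (hG : G.PosDef)
    (E : Matrix m r ℂ) (J : Matrix m q ℂ)
    (hEE : Eᴴ * E = 1) (hJJ : Jᴴ * J = 1) (hEJ : Eᴴ * J = 0)
    (hres : E * Eᴴ + J * Jᴴ = 1) :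
    G⁻¹ - G⁻¹ * (E * ((Eᴴ * (G⁻¹ * E))⁻¹ * (Eᴴ * G⁻¹))) = J * ((Jᴴ * (G * J))⁻¹ * Jᴴ) := by
  have hΓ : (G⁻¹).PosDef := hG.inv
  have hc : (Eᴴ * (G⁻¹ * E)).PosDef := posdef_comp hΓ E hEE
  have hH : (Jᴴ * (G * J)).PosDef := posdef_comp hG J hJJ
  set Γ := G⁻¹ with hΓdef
  set c := Eᴴ * (Γ * E) with hcdef
  set H := Jᴴ * (G * J) with hHdef
  have hGu : IsUnit G.det := hG.det_pos.ne'.isUnit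
  have hcu : IsUnit c.det := hc.det_pos.ne'.isUnit
  set X := Γ - Γ * (E * (c⁻¹ * (Eᴴ * Γ))) with hXdef
  have hXE : X * E = 0 := by
    rw [hXdef, Matrix.sub_mul]
    have h1 : (Γ * (E * (c⁻¹ * (Eᴴ * Γ)))) * E = Γ * (E * (c⁻¹ * c)) := by
      rw [hcdef]; simp only [Matrix.mul_assoc]
    rw [h1, Matrix.nonsing_inv_mul _ hcu, Matrix.mul_one, sub_self]
  have hEX : Eᴴ * X = 0 := by
    rw [hXdef, Matrix.mul_sub]
    have h1 : Eᴴ * (Γ * (E * (c⁻¹ * (Eᴴ * Γ)))) = c * (c⁻¹ * (Eᴴ * Γ)) := by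
      rw [hcdef]; simp only [Matrix.mul_assoc]
    rw [h1, mul_mul_cancel (Matrix.mul_nonsing_inv _ hcu), sub_self]
  have hΓGJ : Γ * (G * J) = J := by
    rw [← Matrix.mul_assoc, hΓdef, Matrix.nonsing_inv_mul _ hGu, Matrix.one_mul]
  have hXGJ : X * (G * J) = J := by
    rw [hXdef, Matrix.sub_mul]
    have h1 : (Γ * (E * (c⁻¹ * (Eᴴ * Γ)))) * (G * J)
        = Γ * (E * (c⁻¹ * (Eᴴ * (Γ * (G * J))))) := by
      simp only [Matrix.mul_assoc]
    rw [h1, hΓGJ, hEJ, Matrix.mul_zero, Matrix.mul_zero, Matrix.mul_zero, sub_zero]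
  have hX1 : X = J * ((Jᴴ * (X * J)) * Jᴴ) := by
    have z1 : ∀ (Z : Matrix m m ℂ), Eᴴ * (X * Z) = 0 := fun Z => mul_mul_zero hEX Z
    have z3 : X * (E * Eᴴ) = 0 := mul_mul_zero hXE Eᴴ
    calc X = 1 * (X * 1) := by rw [Matrix.one_mul, Matrix.mul_one]
      _ = (E * Eᴴ + J * Jᴴ) * (X * (E * Eᴴ + J * Jᴴ)) := by rw [hres]
      _ = J * ((Jᴴ * (X * J)) * Jᴴ) := by
          simp only [Matrix.mul_add, Matrix.add_mul, Matrix.mul_assoc, z1, z3,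
            Matrix.mul_zero, zero_add, add_zero, Matrix.zero_mul]
  have hW : (Jᴴ * (X * J)) * H = 1 := by
    have h2 : J * ((Jᴴ * (X * J)) * H) = J := by
      calc J * ((Jᴴ * (X * J)) * H) = (J * ((Jᴴ * (X * J)) * Jᴴ)) * (G * J) := by
            rw [hHdef]; simp only [Matrix.mul_assoc]
        _ = X * (G * J) := by rw [← hX1]
        _ = J := hXGJ
    have h3 := congrArg (fun M => Jᴴ * M) h2
    rwa [mul_mul_cancel hJJ, hJJ] at h3
  rw [Matrix.inv_eq_left_inv hW]
  exact hX1

theorem stmt11 (p n : ℕ) (hp : 0 < p) (hn : 0 < n)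
    (G : Matrix (Idx n p) (Idx n p) ℂ) (hG : G.PosDef) (hT : BlockToeplitz n p G) :
    ∀ lam om : ℂ,
      (1 - lam * conj om) • (Fm n p lam * G⁻¹ * (Fm n p om)ᴴ) =
        Fm n p lam * G⁻¹ * Ek n p 0 * ((Ek n p 0)ᴴ * G⁻¹ * Ek n p 0)⁻¹ * (Ek n p 0)ᴴ * G⁻¹ *
            (Fm n p om)ᴴ -
          (lam * conj om) •
            (Fm n p lam * G⁻¹ * Ek n p (Fin.last n) *
              ((Ek n p (Fin.last n))ᴴ * G⁻¹ * Ek n p (Fin.last n))⁻¹ * (Ek n p (Fin.last n))ᴴ *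
              G⁻¹ * (Fm n p om)ᴴ) := by
  intro lam om
  simp only [Matrix.mul_assoc]
  set Γ := G⁻¹ with hΓdef
  set E := Ek n p 0 with hEdef
  set L := Ek n p (Fin.last n) with hLdef
  set P := J0 n p with hPdef
  set Q := Jnn n p with hQdef
  set Φ := Fm n p lam with hΦdef
  set Ω := Fm n p om with hΩdef
  set v := (starRingEnd ℂ) om with hvdef
  set c0 := Eᴴ * (Γ * E) with hc0def
  set cn := Lᴴ * (Γ * L) with hcndef
  have hcn : cn.PosDef := posdef_comp hG.inv L (hEkEk _)
  have hcnu : IsUnit cn.det := hcn.det_pos.ne'.isUnit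
  set Y := Γ - Γ * (L * (cn⁻¹ * (Lᴴ * Γ))) with hYdef
  have hYL : Y * L = 0 := by
    rw [hYdef, Matrix.sub_mul]
    have h1 : (Γ * (L * (cn⁻¹ * (Lᴴ * Γ)))) * L = Γ * (L * (cn⁻¹ * cn)) := by
      rw [hcndef]; simp only [Matrix.mul_assoc]
    rw [h1, Matrix.nonsing_inv_mul _ hcnu, Matrix.mul_one, sub_self]
  have hLY : Lᴴ * Y = 0 := by
    rw [hYdef, Matrix.mul_sub]
    have h1 : Lᴴ * (Γ * (L * (cn⁻¹ * (Lᴴ * Γ)))) = cn * (cn⁻¹ * (Lᴴ * Γ)) := by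
      rw [hcndef]; simp only [Matrix.mul_assoc]
    rw [h1, mul_mul_cancel (Matrix.mul_nonsing_inv _ hcnu), sub_self]
  have hstar : Γ - Γ * (E * (c0⁻¹ * (Eᴴ * Γ))) = (P * Qᴴ) * (Y * (Q * Pᴴ)) := by
    have k0 := keyL G hG E P (hEkEk 0) hJ0J0 hE0J0 hres0
    have kn := keyL G hG L Q (hEkEk _) hJnJn hLJn hresn
    rw [← hToe G hT] at kn
    rw [k0, hYdef, kn]
    rw [hPdef, hQdef]
    simp only [Matrix.mul_assoc, mul_mul_cancel hJnJn]
  have hshiftΩ : (Q * Pᴴ) * Ωᴴ = v • Ωᴴ - (v^(n+1)) • L := by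
    have h := congrArg conjTranspose (hshift (n := n) (p := p) om)
    simp only [conjTranspose_mul, conjTranspose_sub, conjTranspose_smul,
      conjTranspose_conjTranspose, Matrix.mul_assoc] at h
    rw [← hΩdef, ← hPdef, ← hQdef, ← hLdef] at h
    rw [← Matrix.mul_assoc] at h
    rw [h, hvdef]
    simp only [starRingEnd_apply, star_pow]
  have key : Φ * (Γ * Ωᴴ) - Φ * (Γ * (E * (c0⁻¹ * (Eᴴ * (Γ * Ωᴴ)))))
      = (lam * v) • (Φ * (Γ * Ωᴴ))
        - (lam * v) • (Φ * (Γ * (L * (cn⁻¹ * (Lᴴ * (Γ * Ωᴴ)))))) := by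
    have h0 := congrArg (fun M => Φ * (M * Ωᴴ)) hstar
    calc Φ * (Γ * Ωᴴ) - Φ * (Γ * (E * (c0⁻¹ * (Eᴴ * (Γ * Ωᴴ)))))
        = Φ * ((Γ - Γ * (E * (c0⁻¹ * (Eᴴ * Γ)))) * Ωᴴ) := by
          simp only [Matrix.sub_mul, Matrix.mul_sub, Matrix.mul_assoc]
      _ = Φ * (((P * Qᴴ) * (Y * (Q * Pᴴ))) * Ωᴴ) := h0
      _ = (Φ * (P * Qᴴ)) * (Y * ((Q * Pᴴ) * Ωᴴ)) := by simp only [Matrix.mul_assoc]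
      _ = (lam • Φ - (lam^(n+1)) • Lᴴ) * (Y * (v • Ωᴴ - (v^(n+1)) • L)) := by
          rw [hshift lam, hshiftΩ, hΦdef, hLdef]
      _ = (lam • Φ - (lam^(n+1)) • Lᴴ) * (v • (Y * Ωᴴ)) := by
          rw [Matrix.mul_sub, Matrix.mul_smul, Matrix.mul_smul, hYL, smul_zero, sub_zero]
      _ = (lam * v) • (Φ * (Y * Ωᴴ)) := by
          rw [Matrix.sub_mul, Matrix.smul_mul, Matrix.smul_mul, Matrix.mul_smul,
            Matrix.mul_smul, mul_mul_zero hLY, smul_zero, smul_zero, sub_zero,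
            smul_smul]
      _ = (lam * v) • (Φ * (Γ * Ωᴴ))
            - (lam * v) • (Φ * (Γ * (L * (cn⁻¹ * (Lᴴ * (Γ * Ωᴴ)))))) := by
          rw [hYdef, Matrix.sub_mul, Matrix.mul_sub, smul_sub]
          simp only [Matrix.mul_assoc]
  calc (1 - lam * v) • (Φ * (Γ * Ωᴴ))
      = Φ * (Γ * Ωᴴ) - (lam * v) • (Φ * (Γ * Ωᴴ)) := by rw [sub_smul, one_smul]
    _ = (Φ * (Γ * Ωᴴ) - Φ * (Γ * (E * (c0⁻¹ * (Eᴴ * (Γ * Ωᴴ))))))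
        + (Φ * (Γ * (E * (c0⁻¹ * (Eᴴ * (Γ * Ωᴴ))))) - (lam * v) • (Φ * (Γ * Ωᴴ))) := by
        rw [sub_add_sub_cancel]
    _ = ((lam * v) • (Φ * (Γ * Ωᴴ))
          - (lam * v) • (Φ * (Γ * (L * (cn⁻¹ * (Lᴴ * (Γ * Ωᴴ)))))))
        + (Φ * (Γ * (E * (c0⁻¹ * (Eᴴ * (Γ * Ωᴴ))))) - (lam * v) • (Φ * (Γ * Ωᴴ))) := by
        rw [key]
    _ = Φ * (Γ * (E * (c0⁻¹ * (Eᴴ * (Γ * Ωᴴ)))))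
        - (lam * v) • (Φ * (Γ * (L * (cn⁻¹ * (Lᴴ * (Γ * Ωᴴ)))))) := by abel

end
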